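/- arXiv:2007.07703 — 7 statements merged into one kernel-verified Lean document; each statement's English description precedes it below -/
import Mathlib

section
/- A likelihood appraisal λ on a field of sets is (finitely) additive if and only if it is both totally monotone and symmetric (i.e., λ(Aᶜ) = 1 − λ(A) for all A in the field). -/
open Finset

/-- Union over a finset of sets in a field stays in the field. -/
lemma biUnion_mem_aux {Ω ι : Type*} (C : Set (Set Ω)) (hempty : ∅ ∈ C)
    (hUC : ∀ A ∈ C, ∀ B ∈ C, A ∪ B ∈ C) (s : Finset ι) (A : ι → Set Ω)
    (hA : ∀ i ∈ s, A i ∈ C) : (⋃ i ∈ s, A i) ∈ C := by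
  classical
  induction s using Finset.induction with
  | empty => simpa using hempty
  | @insert a s ha ih =>
    simp only [Finset.set_biUnion_insert]
    exact hUC _ (hA _ (Finset.mem_insert_self _ _)) _
      (ih fun i hi => hA _ (Finset.mem_insert_of_mem hi))

/-- Inclusion-exclusion for a modular set function on a field. -/
lemma ie_aux {Ω ι : Type*} [DecidableEq ι] (C : Set (Set Ω)) (hempty : ∅ ∈ C)
    (hIC : ∀ A ∈ C, ∀ B ∈ C, A ∩ B ∈ C) (hUC : ∀ A ∈ C, ∀ B ∈ C, A ∪ B ∈ C)
    (lam : Set Ω → ℝ) (h0 : lam ∅ = 0)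
    (hmod : ∀ A ∈ C, ∀ B ∈ C, lam (A ∪ B) + lam (A ∩ B) = lam A + lam B)
    (s : Finset ι) (A : ι → Set Ω) (hA : ∀ i ∈ s, A i ∈ C) :
    ∑ I ∈ s.powerset, (-1:ℝ)^I.card * lam (⋂ i ∈ I, A i)
      = lam Set.univ - lam (⋃ i ∈ s, A i) := by
  induction s using Finset.induction generalizing A with
  | empty => simp [h0]
  | @insert a s ha ih =>
    have hAa : A a ∈ C := hA _ (Finset.mem_insert_self _ _)
    have hAs : ∀ i ∈ s, A i ∈ C := fun i hi => hA _ (Finset.mem_insert_of_mem hi)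
    have hU : (⋃ i ∈ s, A i) ∈ C := biUnion_mem_aux C hempty hUC s A hAs
    rw [Finset.sum_powerset_insert ha]
    -- second sum: subsets containing `a`
    have h2 : ∑ I ∈ s.powerset, (-1:ℝ)^(insert a I).card * lam (⋂ i ∈ insert a I, A i)
        = ∑ I ∈ s.powerset, -((-1:ℝ)^I.card * lam (A a ∩ ⋂ i ∈ I, A i)) := by
      refine Finset.sum_congr rfl fun I hI => ?_
      have haI : a ∉ I := fun h => ha (Finset.mem_powerset.1 hI h)
      rw [Finset.card_insert_of_notMem haI, Finset.set_biInter_insert, pow_succ]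
      ring
    rw [h2, Finset.sum_neg_distrib]
    -- compare with IH applied to the family `fun i => A a ∩ A i`
    have hB : ∀ i ∈ s, (A a ∩ A i) ∈ C := fun i hi => hIC _ hAa _ (hAs i hi)
    have ihB := ih (fun i => A a ∩ A i) hB
    have hsplit : ∑ I ∈ s.powerset, (-1:ℝ)^I.card * lam (A a ∩ ⋂ i ∈ I, A i)
        = ∑ I ∈ s.powerset, (-1:ℝ)^I.card * lam (⋂ i ∈ I, A a ∩ A i)
          + lam (A a) - lam Set.univ := by
      have hmem : (∅ : Finset ι) ∈ s.powerset := Finset.empty_mem_powerset s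
      rw [← Finset.add_sum_erase _ _ hmem, ← Finset.add_sum_erase _ _ hmem]
      have heq : ∑ I ∈ s.powerset.erase ∅, (-1:ℝ)^I.card * lam (A a ∩ ⋂ i ∈ I, A i)
          = ∑ I ∈ s.powerset.erase ∅, (-1:ℝ)^I.card * lam (⋂ i ∈ I, A a ∩ A i) := by
        refine Finset.sum_congr rfl fun I hI => ?_
        have hne : I.Nonempty := Finset.nonempty_of_ne_empty (Finset.mem_erase.1 hI).1
        obtain ⟨j, hj⟩ := hne
        have hset : A a ∩ ⋂ i ∈ I, A i = ⋂ i ∈ I, (A a ∩ A i) := by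
          ext x
          simp only [Set.mem_inter_iff, Set.mem_iInter]
          constructor
          · rintro ⟨hx, h⟩ i hi
            exact ⟨hx, h i hi⟩
          · intro h
            exact ⟨(h j hj).1, fun i hi => (h i hi).2⟩
        rw [hset]
      rw [heq]
      simp
      ring
    have hBU : (⋃ i ∈ s, (A a ∩ A i)) = A a ∩ ⋃ i ∈ s, A i :=
      (Set.inter_iUnion₂ _ _).symm
    have hmodU := hmod _ hAa _ hU
    rw [ih A hAs, hsplit, ihB, hBU, Finset.set_biUnion_insert]
    linarith

/-- total monotonicity at n = 2 gives the two-set inequality. -/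
lemma pair_ineq {Ω : Type} (lam : Set Ω → ℝ) (X Y : Set Ω)
    (h : lam (⋃ i, (![X, Y]) i) ≥
          ∑ I ∈ (Finset.univ.powerset.erase (∅ : Finset (Fin 2))),
            (-1 : ℝ) ^ (I.card + 1) * lam (⋂ i ∈ I, (![X, Y]) i)) :
    lam (X ∪ Y) ≥ lam X + lam Y - lam (X ∩ Y) := by
  have hU : (⋃ i, (![X, Y]) i) = X ∪ Y := by
    ext x
    simp [Fin.exists_fin_two]
  have hset : (Finset.univ.powerset.erase (∅ : Finset (Fin 2)))
      = {{0}, {1}, {0, 1}} := by decide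
  rw [hU, hset] at h
  rw [Finset.sum_insert (by decide), Finset.sum_insert (by decide),
    Finset.sum_singleton] at h
  simp only [Finset.set_biInter_singleton, Finset.set_biInter_insert,
    Matrix.cons_val_zero, Matrix.cons_val_one, Matrix.head_cons] at h
  norm_num at h
  linarith

/-- A likelihood appraisal on a field of sets is finitely additive iff it is
totally monotone and symmetric. -/
theorem stmt_1 {Ω : Type} (C : Set (Set Ω))
    (hempty : ∅ ∈ C) (hcompl : ∀ A ∈ C, Aᶜ ∈ C)
    (hunion : ∀ A ∈ C, ∀ B ∈ C, A ∪ B ∈ C)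
    (lam : Set Ω → ℝ)
    (h0 : lam ∅ = 0) (h1 : lam Set.univ = 1)
    (hrange : ∀ A ∈ C, lam A ∈ Set.Icc (0:ℝ) 1) :
    (∀ A ∈ C, ∀ B ∈ C, A ∩ B = ∅ → lam (A ∪ B) = lam A + lam B) ↔
      ((∀ (n : ℕ) (A : Fin n → Set Ω), (∀ i, A i ∈ C) →
        lam (⋃ i, A i) ≥
          ∑ I ∈ (Finset.univ.powerset.erase (∅ : Finset (Fin n))),
            (-1 : ℝ) ^ (I.card + 1) * lam (⋂ i ∈ I, A i)) ∧
       (∀ A ∈ C, lam Aᶜ = 1 - lam A)) := by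
  have hIC : ∀ A ∈ C, ∀ B ∈ C, A ∩ B ∈ C := by
    intro A hA B hB
    have : A ∩ B = (Aᶜ ∪ Bᶜ)ᶜ := by ext x; simp
    rw [this]
    exact hcompl _ (hunion _ (hcompl _ hA) _ (hcompl _ hB))
  constructor
  · intro hadd
    have hmod : ∀ A ∈ C, ∀ B ∈ C, lam (A ∪ B) + lam (A ∩ B) = lam A + lam B := by
      intro A hA B hB
      have hD : (B ∩ Aᶜ) ∈ C := hIC _ hB _ (hcompl _ hA)
      have e1 : A ∪ (B ∩ Aᶜ) = A ∪ B := by ext x; simp; tauto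
      have e2 : A ∩ (B ∩ Aᶜ) = ∅ := by ext x; simp; tauto
      have e3 : (A ∩ B) ∪ (B ∩ Aᶜ) = B := by ext x; simp; tauto
      have e4 : (A ∩ B) ∩ (B ∩ Aᶜ) = ∅ := by ext x; simp; tauto
      have h1' := hadd _ hA _ hD e2
      have h2' := hadd _ (hIC _ hA _ hB) _ hD e4
      rw [e1] at h1'; rw [e3] at h2'
      linarith
    constructor
    · intro n A hA
      have key := ie_aux C hempty hIC hunion lam h0 hmod Finset.univ A (fun i _ => hA i)
      have hU : (⋃ i ∈ (Finset.univ : Finset (Fin n)), A i) = ⋃ i, A i := by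
        simp
      rw [hU] at key
      have hmem : (∅ : Finset (Fin n)) ∈ (Finset.univ : Finset (Fin n)).powerset :=
        Finset.empty_mem_powerset _
      rw [← Finset.add_sum_erase _ _ hmem] at key
      have hIe : (⋂ i ∈ (∅ : Finset (Fin n)), A i) = Set.univ := by simp
      rw [hIe] at key
      simp only [Finset.card_empty, pow_zero, one_mul] at key
      have : ∑ I ∈ (Finset.univ.powerset.erase (∅ : Finset (Fin n))),
            (-1 : ℝ) ^ (I.card + 1) * lam (⋂ i ∈ I, A i)
          = -∑ I ∈ (Finset.univ.powerset.erase (∅ : Finset (Fin n))),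
            (-1 : ℝ) ^ I.card * lam (⋂ i ∈ I, A i) := by
        rw [← Finset.sum_neg_distrib]
        refine Finset.sum_congr rfl fun I hI => ?_
        rw [pow_succ]; ring
      rw [this]
      linarith
    · intro A hA
      have e1 : A ∪ Aᶜ = Set.univ := by ext x; simp [em]
      have e2 : A ∩ Aᶜ = ∅ := by ext x; simp
      have := hadd _ hA _ (hcompl _ hA) e2
      rw [e1, h1] at this
      linarith
  · rintro ⟨hTM, hSym⟩ A hA B hB hdisj
    have key : ∀ X ∈ C, ∀ Y ∈ C, lam (X ∪ Y) ≥ lam X + lam Y - lam (X ∩ Y) := by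
      intro X hX Y hY
      refine pair_ineq lam X Y (hTM 2 ![X, Y] ?_)
      intro i
      fin_cases i <;> simpa
    have k1 := key _ hA _ hB
    rw [hdisj, h0] at k1
    have k2 := key _ (hcompl _ hA) _ (hcompl _ hB)
    have e1 : Aᶜ ∪ Bᶜ = Set.univ := by
      rw [← Set.compl_inter, hdisj, Set.compl_empty]
    have e2 : Aᶜ ∩ Bᶜ = (A ∪ B)ᶜ := (Set.compl_union A B).symm
    rw [e1, e2, h1, hSym _ hA, hSym _ hB, hSym _ (hunion _ hA _ hB)] at k2
    linarith
end

section
/- For any monotone capacity λ on the power set of a finite set Ω and any sound truth valuation t: L → 2^Ω, there exists a retaining model with additive measure: letting Ω' = [0,1] with Lebesgue measure μ and t'(φ) = [0, λ(t(φ))] (and ∅ if λ(t(φ))=0), the map t' is a monotone truth valuation and μ(t'(φ)) = λ(t(φ)) for all φ ∈ L. -/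
inductive Form (α : Type) : Type where
  | atom : α → Form α
  | tru : Form α
  | fls : Form α
  | neg : Form α → Form α
  | conj : Form α → Form α → Form α
  | disj : Form α → Form α → Form α

def Form.eval {α : Type} (v : α → Prop) : Form α → Prop
  | .atom a => v a
  | .tru => True
  | .fls => False
  | .neg φ => ¬ φ.eval v
  | .conj φ ψ => φ.eval v ∧ ψ.eval v
  | .disj φ ψ => φ.eval v ∨ ψ.eval v

def Entails {α : Type} (φ ψ : Form α) : Prop := ∀ v : α → Prop, φ.eval v → ψ.eval v

def FEquiv {α : Type} (φ ψ : Form α) : Prop := Entails φ ψ ∧ Entails ψ φ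

def Sound {α Ω : Type} (t : Form α → Set Ω) : Prop :=
  t .tru = Set.univ ∧ t .fls = ∅ ∧
  (∀ φ, t (.neg φ) = (t φ)ᶜ) ∧
  (∀ φ ψ, t (.conj φ ψ) = t φ ∩ t ψ) ∧
  (∀ φ ψ, t (.disj φ ψ) = t φ ∪ t ψ) ∧
  (∀ φ ψ, FEquiv φ ψ → t φ = t ψ)

open scoped Classical

/-- A monotone capacity composed with a sound truth valuation admits a
representation on [0,1] with Lebesgue measure via initial segments. -/
theorem stmt_6 {α Ω : Type} [Fintype Ω]
    (lam : Set Ω → ℝ)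
    (h0 : lam ∅ = 0) (h1 : lam Set.univ = 1)
    (hmono : ∀ A B : Set Ω, A ⊆ B → lam A ≤ lam B)
    (t : Form α → Set Ω) (ht : Sound t)
    (t' : Form α → Set ℝ)
    (ht' : ∀ φ, t' φ = if lam (t φ) = 0 then (∅ : Set ℝ) else Set.Icc 0 (lam (t φ))) :
    (∀ φ ψ, Entails φ ψ → t' φ ⊆ t' ψ) ∧
    (∀ φ, MeasureTheory.volume (t' φ) = ENNReal.ofReal (lam (t φ))) := by
  obtain ⟨htru, hfls, hneg, hconj, hdisj, hequiv⟩ := ht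
  have hsub : ∀ φ ψ, Entails φ ψ → t φ ⊆ t ψ := by
    intro φ ψ h
    have heq : FEquiv (.conj φ ψ) φ := by
      constructor
      · intro v hv; exact hv.1
      · intro v hv; exact ⟨hv, h v hv⟩
    have := hequiv _ _ heq
    rw [hconj] at this
    rw [← this]; exact Set.inter_subset_right
  have hnn : ∀ φ, 0 ≤ lam (t φ) := by
    intro φ; rw [← h0]; exact hmono _ _ (Set.empty_subset _)
  constructor
  · intro φ ψ h
    rw [ht' φ, ht' ψ]
    by_cases hφ : lam (t φ) = 0
    · simp [hφ]
    · have hle := hmono _ _ (hsub φ ψ h)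
      have hψ : lam (t ψ) ≠ 0 := by
        intro h0'
        exact hφ (le_antisymm (h0' ▸ hle) (hnn φ))
      simp only [hφ, hψ, if_false]
      exact Set.Icc_subset_Icc le_rfl hle
  · intro φ
    rw [ht' φ]
    by_cases hφ : lam (t φ) = 0
    · simp [hφ]
    · simp [hφ, Real.volume_Icc]
end

section
/- (Wald–Pearce Lemma) Let Ω be a finite set and A a finite set of functions x: Ω → ℝ. Then x ∈ A maximizes the expectation ∫ x dλ over A for some (finitely additive) probability measure λ on Ω if and only if x is not strictly pointwise dominated by any convex combination of elements of A (i.e., there is no y in the convex hull of A with y(ω) > x(ω) for all ω ∈ Ω). -/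
/-- Wald–Pearce Lemma: a strategy in a finite set is a best response to some
probability measure iff it is not strictly pointwise dominated by a convex
combination of available strategies. -/
theorem stmt_7 {Ω : Type} [Fintype Ω] [Nonempty Ω]
    (A : Finset (Ω → ℝ)) (x : Ω → ℝ) (hx : x ∈ A) :
    (∃ lam : Ω → ℝ, (∀ ω, 0 ≤ lam ω) ∧ (∑ ω, lam ω) = 1 ∧
      ∀ y ∈ A, (∑ ω, lam ω * y ω) ≤ ∑ ω, lam ω * x ω) ↔
    ¬ ∃ y ∈ convexHull ℝ (A : Set (Ω → ℝ)), ∀ ω, x ω < y ω := by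
  constructor
  · rintro ⟨lam, hnn, hsum, hmax⟩ ⟨y, hy, hdom⟩
    -- the linear functional v ↦ ∑ lam ω * v ω
    set g : (Ω → ℝ) →ₗ[ℝ] ℝ :=
      { toFun := fun v => ∑ ω, lam ω * v ω,
        map_add' := by
          intro a b; simp [mul_add, Finset.sum_add_distrib]
        map_smul' := by
          intro c a; simp [Finset.mul_sum, mul_left_comm] } with hg
    have hhalf : Convex ℝ {v : Ω → ℝ | g v ≤ g x} :=
      convex_halfSpace_le g.isLinear _
    have hsub : convexHull ℝ (A : Set (Ω → ℝ)) ⊆ {v : Ω → ℝ | g v ≤ g x} := by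
      apply convexHull_min _ hhalf
      intro z hz
      exact hmax z hz
    have hgy : g y ≤ g x := hsub hy
    -- some coordinate has positive weight
    obtain ⟨ω₀, hω₀⟩ : ∃ ω, 0 < lam ω := by
      by_contra hc
      push_neg at hc
      have : (∑ ω, lam ω) = 0 :=
        Finset.sum_eq_zero fun ω _ => le_antisymm (hc ω) (hnn ω)
      rw [hsum] at this; norm_num at this
    have hlt : (∑ ω, lam ω * x ω) < ∑ ω, lam ω * y ω := by
      apply Finset.sum_lt_sum
      · intro i _
        exact mul_le_mul_of_nonneg_left (le_of_lt (hdom i)) (hnn i)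
      · exact ⟨ω₀, Finset.mem_univ _, by
          exact mul_lt_mul_of_pos_left (hdom ω₀) hω₀⟩
    have : g x < g y := hlt
    linarith [hgy]
  · intro h
    classical
    set K : Set (Ω → ℝ) := (fun z => -x + z) '' (convexHull ℝ (A : Set (Ω → ℝ))) with hK
    set P : Set (Ω → ℝ) := Set.pi Set.univ (fun _ => Set.Ioi (0:ℝ)) with hP
    have hPmem : ∀ v : Ω → ℝ, v ∈ P ↔ ∀ ω, 0 < v ω := by
      intro v; simp [hP, Set.mem_pi]
    have hPopen : IsOpen P := isOpen_set_pi Set.finite_univ (fun _ _ => isOpen_Ioi)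
    have hPconv : Convex ℝ P := convex_pi (fun _ _ => convex_Ioi 0)
    have hKconv : Convex ℝ K := (convex_convexHull ℝ _).translate (-x)
    have hdisj : Disjoint P K := by
      rw [Set.disjoint_left]
      rintro v hv ⟨y, hy, rfl⟩
      exact h ⟨y, hy, fun ω => by
        have := (hPmem _).1 hv ω
        simp at this
        linarith⟩
    obtain ⟨f, u, hfP, hfK⟩ := geometric_hahn_banach_open hPconv hPopen hKconv hdisj
    -- 0 ∈ K
    have h0K : (0 : Ω → ℝ) ∈ K :=
      ⟨x, subset_convexHull ℝ _ hx, by simp⟩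
    have hu_le : u ≤ 0 := by
      have := hfK 0 h0K; simpa using this
    -- 1 ∈ P and scalings
    have hone : (fun _ : Ω => (1:ℝ)) ∈ P := (hPmem _).2 fun _ => one_pos
    have hf1 : f (fun _ => (1:ℝ)) < u := hfP _ hone
    have hf1neg : f (fun _ => (1:ℝ)) < 0 := lt_of_lt_of_le hf1 hu_le
    -- u ≥ 0 by scaling: ε f1 < u for all ε > 0
    have hu_ge : 0 ≤ u := by
      by_contra hc
      push_neg at hc
      have hε : 0 < u / (2 * f (fun _ => (1:ℝ))) := by
        apply div_pos_of_neg_of_neg hc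
        linarith
      have hmem : (u / (2 * f (fun _ => (1:ℝ)))) • (fun _ : Ω => (1:ℝ)) ∈ P :=
        (hPmem _).2 fun ω => by simpa using hε
      have := hfP _ hmem
      rw [map_smul] at this
      rw [smul_eq_mul] at this
      have ht : f (fun _ => (1:ℝ)) ≠ 0 := ne_of_lt hf1neg
      have heq : u / (2 * f (fun _ => (1:ℝ))) * f (fun _ => (1:ℝ)) = u / 2 := by
        field_simp
      rw [heq] at this
      linarith
    have hu0 : u = 0 := le_antisymm hu_le hu_ge
    -- coefficients
    set c : Ω → ℝ := fun ω => f (Pi.single ω 1) with hc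
    have hrep : ∀ v : Ω → ℝ, f v = ∑ ω, v ω * c ω := by
      intro v
      conv_lhs => rw [← Finset.univ_sum_single v]
      rw [map_sum]
      apply Finset.sum_congr rfl
      intro ω _
      have : (Pi.single ω (v ω) : Ω → ℝ) = v ω • (Pi.single ω 1 : Ω → ℝ) := by
        funext ω'
        simp [Pi.single_apply, mul_ite]
      rw [this, map_smul, smul_eq_mul]
    have hsumc : (∑ ω, c ω) < 0 := by
      have h1 : f (fun _ => (1:ℝ)) = ∑ ω, c ω := by rw [hrep]; simp
      rw [h1] at hf1neg
      exact hf1neg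
    have hcle : ∀ ω, c ω ≤ 0 := by
      intro ω
      by_contra hpos
      push_neg at hpos
      -- for ε > 0, Pi.single ω 1 + ε • 1 ∈ P
      have key : ∀ ε : ℝ, 0 < ε → c ω + ε * f (fun _ => (1:ℝ)) < 0 := by
        intro ε hε
        have hmem : (Pi.single ω 1 + ε • (fun _ : Ω => (1:ℝ))) ∈ P := by
          apply (hPmem _).2
          intro ω'
          by_cases hω : ω' = ω
          · subst hω; simp; linarith
          · simp [Pi.single_apply, hω]; linarith
        have := hfP _ hmem
        rw [map_add, map_smul, smul_eq_mul, hu0] at this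
        exact this
      have hε : 0 < c ω / (-2 * f (fun _ => (1:ℝ))) := by
        apply div_pos hpos; linarith
      have := key _ hε
      have ht : f (fun _ => (1:ℝ)) ≠ 0 := ne_of_lt hf1neg
      have heq : c ω / (-2 * f (fun _ => (1:ℝ))) * f (fun _ => (1:ℝ)) = -(c ω) / 2 := by
        field_simp
      rw [heq] at this
      linarith
    -- define the measure
    set S : ℝ := -(∑ ω, c ω) with hS
    have hSpos : 0 < S := by rw [hS]; linarith
    refine ⟨fun ω => -(c ω) / S, fun ω => div_nonneg (by linarith [hcle ω]) hSpos.le, ?_, ?_⟩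
    · rw [← Finset.sum_div]
      rw [div_eq_one_iff_eq hSpos.ne']
      simp [hS]
    · intro y hy
      have hyK : (-x + y) ∈ K := ⟨y, subset_convexHull ℝ _ hy, rfl⟩
      have := hfK _ hyK
      rw [hu0, hrep] at this
      -- ∑ (y-x) ω * c ω ≥ 0
      have key : (∑ ω, (y ω - x ω) * c ω) ≥ 0 := by
        have heq : (∑ ω, (y ω - x ω) * c ω) = ∑ ω, (-x + y) ω * c ω := by
          apply Finset.sum_congr rfl
          intro ω _
          simp only [Pi.add_apply, Pi.neg_apply]
          ring
        rw [heq]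
        exact this
      have expand : (∑ ω, (y ω - x ω) * c ω) = (∑ ω, y ω * c ω) - ∑ ω, x ω * c ω := by
        rw [← Finset.sum_sub_distrib]
        apply Finset.sum_congr rfl
        intro ω _; ring
      rw [expand] at key
      have hy' : (∑ ω, -(c ω) / S * y ω) = (-(∑ ω, y ω * c ω)) / S := by
        rw [← Finset.sum_neg_distrib, Finset.sum_div]
        apply Finset.sum_congr rfl
        intro ω _; ring
      have hx' : (∑ ω, -(c ω) / S * x ω) = (-(∑ ω, x ω * c ω)) / S := by
        rw [← Finset.sum_neg_distrib, Finset.sum_div]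
        apply Finset.sum_congr rfl
        intro ω _; ring
      rw [hy', hx']
      exact (div_le_div_iff_of_pos_right hSpos).mpr (by linarith)
end

section
/- Closure of unions of understood sub-theories: let 𝒯 be a theory (set of formulas closed under entailment, not containing ⊥) and π: L → [0,1] monotone with respect to logical entailment. Define an π-understood sub-theory as S ⊆ 𝒯 such that for all φ, ψ: if ψ is derivable from φ together with S, then π(φ) ≤ π(ψ). Then the union of all π-understood sub-theories of 𝒯 is itself an π-understood sub-theory; consequently there is a unique maximal π-understood sub-theory of 𝒯. -/
/-- ψ is derivable from φ together with the set S. -/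
def DerivFrom {α : Type} (S : Set (Form α)) (φ ψ : Form α) : Prop :=
  ∃ l : List (Form α), (∀ η ∈ l, η ∈ S) ∧ Entails (l.foldr Form.conj φ) ψ

/-- S is a π-understood sub-theory of T. -/
def Understood {α : Type} (π : Form α → ℝ) (T S : Set (Form α)) : Prop :=
  S ⊆ T ∧ ∀ φ ψ, DerivFrom S φ ψ → π φ ≤ π ψ

/-- The union of all π-understood sub-theories of a theory T is itself a
π-understood sub-theory, hence there is a unique maximal one. -/
theorem stmt_15 {α : Type} (T : Set (Form α)) (π : Form α → ℝ)
    (hTfls : Form.fls ∉ T)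
    (hTclosed : ∀ φ ∈ T, ∀ ψ, Entails φ ψ → ψ ∈ T)
    (hmono : ∀ φ ψ, Entails φ ψ → π φ ≤ π ψ) :
    Understood π T (⋃₀ {S | Understood π T S}) ∧
      ∀ S, Understood π T S → S ⊆ ⋃₀ {S | Understood π T S} := by
  constructor
  · constructor
    · intro x hx
      obtain ⟨S, hS, hxS⟩ := hx
      exact hS.1 hxS
    · rintro φ ψ ⟨l, hl, hent⟩
      have key : π φ ≤ π (l.foldr Form.conj φ) := by
        clear hent
        induction l with
        | nil => simp
        | cons η l' ih =>
          have hη := hl η (by simp)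
          obtain ⟨S, hS, hηS⟩ := hη
          have h2 : π (l'.foldr Form.conj φ) ≤ π ((η :: l').foldr Form.conj φ) := by
            apply hS.2
            exact ⟨[η], by simpa using hηS, fun v h => h⟩
          exact le_trans (ih (fun η' hη' => hl η' (by simp [hη']))) h2
      exact le_trans key (hmono _ _ hent)
  · intro S hS x hx
    exact ⟨S, hS, hx⟩
end

section
/- Characterization of the maximal understood sub-theory under ∧-distributivity: suppose π(φ) = λ(t(φ)) where λ is a finitely additive probability on a field of sets and t is an exact, ∧-distributive truth valuation. Let 𝒯 be a theory and S the maximal sub-theory of 𝒯 such that derivability of ψ from φ together with S implies π(φ) ≤ π(ψ). Then S = {φ ∈ 𝒯 : π(φ) = 1}. -/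
/-- Under an exact, ∧-distributive representation with a finitely additive
probability, the maximal understood sub-theory of T consists exactly of the
statements of T assigned probability 1. -/
theorem stmt_16 {α Ω : Type} (T : Set (Form α)) (π : Form α → ℝ)
    (hTfls : Form.fls ∉ T)
    (hTclosed : ∀ φ ∈ T, ∀ ψ, Entails φ ψ → ψ ∈ T)
    (C : Set (Set Ω))
    (hempty : ∅ ∈ C) (hcompl : ∀ A ∈ C, Aᶜ ∈ C)
    (hunion : ∀ A ∈ C, ∀ B ∈ C, A ∪ B ∈ C)
    (t : Form α → Set Ω)
    (htru : t .tru = Set.univ) (hfls : t .fls = ∅)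
    (htC : ∀ φ, t φ ∈ C)
    (hexact : ∀ φ ψ, FEquiv φ ψ → t φ = t ψ)
    (hand : ∀ φ ψ, t (.conj φ ψ) = t φ ∩ t ψ)
    (lam : Set Ω → ℝ)
    (h0 : lam ∅ = 0) (h1 : lam Set.univ = 1)
    (hrange : ∀ A ∈ C, lam A ∈ Set.Icc (0:ℝ) 1)
    (hadd : ∀ A ∈ C, ∀ B ∈ C, A ∩ B = ∅ → lam (A ∪ B) = lam A + lam B)
    (hrep : ∀ φ, lam (t φ) = π φ) :
    ⋃₀ {S | Understood π T S} = {φ ∈ T | π φ = 1} := by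

  have hinter : ∀ A ∈ C, ∀ B ∈ C, A ∩ B ∈ C := by
    intro A hA B hB
    have : A ∩ B = (Aᶜ ∪ Bᶜ)ᶜ := by rw [Set.compl_union, compl_compl, compl_compl]
    rw [this]
    exact hcompl _ (hunion _ (hcompl _ hA) _ (hcompl _ hB))
  have hmono : ∀ A ∈ C, ∀ B ∈ C, A ⊆ B → lam A ≤ lam B := by
    intro A hA B hB hAB
    have hc : B ∩ Aᶜ ∈ C := hinter B hB Aᶜ (hcompl A hA)
    have hdis : A ∩ (B ∩ Aᶜ) = ∅ := by ext x; simp; tauto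
    have hu : A ∪ (B ∩ Aᶜ) = B := by
      ext x; simp; constructor
      · rintro (h | h); exact hAB h; exact h.1
      · intro h; by_cases hx : x ∈ A <;> tauto
    have h := hadd A hA _ hc hdis
    rw [hu] at h
    have := (hrange _ hc).1
    linarith
  have hentsub : ∀ φ ψ, Entails φ ψ → t φ ⊆ t ψ := by
    intro φ ψ h
    have he : FEquiv φ (.conj φ ψ) := ⟨fun v hv => ⟨hv, h v hv⟩, fun v hv => hv.1⟩
    have := hexact _ _ he
    rw [hand] at this
    rw [this]
    exact Set.inter_subset_right
  have hone : ∀ η, π η = 1 → ∀ A ∈ C, lam (A ∩ t η) = lam A := by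
    intro η hη A hA
    have hηC := htC η
    have hcC := hcompl _ hηC
    have hadd' := hadd _ hηC _ hcC (Set.inter_compl_self _)
    rw [Set.union_compl_self, h1, hrep, hη] at hadd'
    have hcz : lam (t η)ᶜ = 0 := by linarith
    have hAi : A ∩ t η ∈ C := hinter _ hA _ hηC
    have hAc : A ∩ (t η)ᶜ ∈ C := hinter _ hA _ hcC
    have h2 : lam (A ∩ (t η)ᶜ) = 0 :=
      le_antisymm (by
        have := hmono _ hAc _ hcC (Set.inter_subset_right)
        linarith) (hrange _ hAc).1
    have hdis : (A ∩ t η) ∩ (A ∩ (t η)ᶜ) = ∅ := by ext x; simp; tauto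
    have hu : (A ∩ t η) ∪ (A ∩ (t η)ᶜ) = A := by
      rw [← Set.inter_union_distrib_left, Set.union_compl_self, Set.inter_univ]
    have hsplit := hadd _ hAi _ hAc hdis
    rw [hu] at hsplit
    linarith
  have hfold : ∀ (l : List (Form α)) (φ : Form α), (∀ η ∈ l, π η = 1) →
      lam (t (l.foldr Form.conj φ)) = lam (t φ) := by
    intro l
    induction l with
    | nil => intro φ _; rfl
    | cons η l ih =>
      intro φ h
      simp only [List.foldr]
      rw [hand, Set.inter_comm, hone η (h η (by simp)) _ (htC _),
        ih φ (fun x hx => h x (by simp [hx]))]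
  have hU : Understood π T {φ ∈ T | π φ = 1} := by
    constructor
    · exact fun φ h => h.1
    · rintro φ ψ ⟨l, hl, hent⟩
      have h1' := hfold l φ (fun η hη => (hl η hη).2)
      have hle := hmono _ (htC _) _ (htC _) (hentsub _ _ hent)
      rw [h1'] at hle
      rw [← hrep, ← hrep]
      exact hle
  ext φ
  simp only [Set.mem_sUnion, Set.mem_setOf_eq, Set.mem_sep_iff]
  constructor
  · rintro ⟨S, hS, hφS⟩
    refine ⟨hS.1 hφS, ?_⟩
    have htru1 : π Form.tru = 1 := by rw [← hrep, htru, h1]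
    have hle : π φ ≤ π Form.tru := hS.2 φ .tru ⟨[], by simp, fun v _ => trivial⟩
    have hge : π Form.tru ≤ π φ := hS.2 .tru φ ⟨[φ], by simpa using hφS,
      fun v hv => hv.1⟩
    linarith
  · intro hφ
    exact ⟨_, hU, hφ⟩
end

section
/- For a totally monotone capacity λ' on the power set of a finite set Ω', there exists a finite set Ω (the nonempty subsets of Ω') and a (finitely additive) probability measure λ on Ω such that for every B ⊆ Ω', λ'(B) = λ({A ∈ Ω : A ⊆ B}). (Möbius / Dempster–Shafer representation of belief functions.) -/
open Finset

variable {Ω' : Type} [Fintype Ω'] [DecidableEq Ω']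

private lemma sum_pow_neg_one_real (x : Finset Ω') :
    (∑ m ∈ x.powerset, (-1 : ℝ) ^ m.card) = if x = ∅ then 1 else 0 := by
  have h := Finset.sum_powerset_neg_one_pow_card (x := x)
  have h2 : ((∑ m ∈ x.powerset, (-1 : ℤ) ^ m.card : ℤ) : ℝ)
      = ((if x = ∅ then 1 else 0 : ℤ) : ℝ) := by rw [h]
  push_cast at h2
  simpa using h2

private lemma mobius_inv (lam' : Finset Ω' → ℝ) (h : lam' ∅ = 0) (B : Finset Ω') :
    ∑ A ∈ B.powerset, ∑ C ∈ A.powerset, (-1 : ℝ) ^ (A.card - C.card) * lam' C = lam' B := by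
  rw [Finset.sum_comm' (s := B.powerset) (t := fun A => A.powerset)
    (t' := B.powerset) (s' := fun C => B.powerset.filter (fun A => C ⊆ A))
    (h := by
      intro A C
      simp only [mem_powerset, mem_filter]
      tauto)]
  have key : ∀ C ∈ B.powerset,
      (∑ A ∈ B.powerset.filter (fun A => C ⊆ A), (-1 : ℝ) ^ (A.card - C.card) * lam' C)
        = (if C = B then 1 else 0) * lam' C := by
    intro C hC
    rw [mem_powerset] at hC
    have : (∑ A ∈ B.powerset.filter (fun A => C ⊆ A), (-1 : ℝ) ^ (A.card - C.card))
        = ∑ D ∈ (B \ C).powerset, (-1 : ℝ) ^ D.card := by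
      refine Finset.sum_nbij' (fun A => A \ C) (fun D => D ∪ C) ?_ ?_ ?_ ?_ ?_
      · intro A hA
        rw [mem_filter, mem_powerset] at hA
        rw [mem_powerset]
        exact sdiff_subset_sdiff hA.1 le_rfl
      · intro D hD
        rw [mem_powerset] at hD
        rw [mem_filter, mem_powerset]
        refine ⟨union_subset (hD.trans sdiff_subset) hC, subset_union_right⟩
      · intro A hA
        rw [mem_filter, mem_powerset] at hA
        exact sdiff_union_of_subset hA.2
      · intro D hD
        rw [mem_powerset] at hD
        have hdisj : Disjoint D C := (disjoint_sdiff_self_left (x := C) (y := B)).mono_left hD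
        rw [union_sdiff_cancel_right hdisj]
      · intro A hA
        rw [mem_filter, mem_powerset] at hA
        rw [card_sdiff_of_subset hA.2]
    rw [← Finset.sum_mul, this, sum_pow_neg_one_real]
    congr 1
    simp only [sdiff_eq_empty_iff_subset]
    by_cases h' : C = B
    · simp [h']
    · simp only [if_neg h', if_neg (fun hBC => h' (subset_antisymm hC hBC))]
  rw [Finset.sum_congr rfl key]
  simp only [ite_mul, one_mul, zero_mul]
  rw [Finset.sum_ite_eq' B.powerset B lam', if_pos (mem_powerset_self B)]

/-- Möbius / Dempster–Shafer representation: a totally monotone capacity on a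
finite set is the distribution over nonempty subsets of a probability mass
function. -/
theorem stmt_18 {Ω' : Type} [Fintype Ω'] [DecidableEq Ω'] [Nonempty Ω']
    (lam' : Finset Ω' → ℝ)
    (h0 : lam' ∅ = 0) (h1 : lam' Finset.univ = 1)
    (hmono : ∀ A B : Finset Ω', A ⊆ B → lam' A ≤ lam' B)
    (htm : ∀ (n : ℕ) (B : Fin n → Finset Ω'),
      lam' (Finset.univ.sup B) ≥
        ∑ I ∈ (Finset.univ.powerset.erase (∅ : Finset (Fin n))),
          (-1 : ℝ) ^ (I.card + 1) * lam' (I.inf B)) :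
    ∃ m : Finset Ω' → ℝ,
      (∀ A, 0 ≤ m A) ∧ m ∅ = 0 ∧
      (∑ A ∈ Finset.univ.powerset, m A) = 1 ∧
      ∀ B : Finset Ω', lam' B = ∑ A ∈ B.powerset, m A := by
  classical
  set m : Finset Ω' → ℝ := fun A => ∑ C ∈ A.powerset, (-1 : ℝ) ^ (A.card - C.card) * lam' C
    with hm
  have hinv : ∀ B : Finset Ω', ∑ A ∈ B.powerset, m A = lam' B := fun B =>
    mobius_inv lam' h0 B
  have hme : m ∅ = 0 := by simp [hm, h0]
  refine ⟨m, ?_, hme, by rw [hinv]; exact h1, fun B => (hinv B).symm⟩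
  -- nonnegativity
  intro A
  rcases eq_or_ne A ∅ with rfl | hne
  · rw [hme]
  · -- A nonempty
    have hApos : 0 < A.card := Finset.card_pos.2 (nonempty_iff_ne_empty.2 hne)
    set f : Fin A.card → Ω' := fun i => ((A.equivFin.symm i : A) : Ω') with hf
    have hfA : ∀ i, f i ∈ A := fun i => (A.equivFin.symm i).2
    have hfinj : Function.Injective f := fun i j h => by
      have := A.equivFin.symm.injective (Subtype.ext h)
      exact this
    have hfsurj : ∀ a ∈ A, ∃ i, f i = a := fun a ha =>
      ⟨A.equivFin ⟨a, ha⟩, by simp [hf]⟩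
    rcases eq_or_lt_of_le (Nat.one_le_iff_ne_zero.2 hApos.ne') with h1' | h2
    · -- card A = 1
      obtain ⟨a, rfl⟩ := Finset.card_eq_one.1 h1'.symm
      have : m {a} = lam' {a} := by
        have hp : ({a} : Finset Ω').powerset = {∅, {a}} := by
          ext C; simp [Finset.subset_singleton_iff]
        simp [hm, hp, h0]
      rw [this]
      have := hmono ∅ {a} (Finset.empty_subset _)
      linarith [this, h0]
    · -- 2 ≤ card A
      set B : Fin A.card → Finset Ω' := fun i => A.erase (f i) with hB
      have hsup : Finset.univ.sup B = A := by
        apply le_antisymm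
        · exact Finset.sup_le fun i _ => Finset.erase_subset _ _
        · intro a ha
          obtain ⟨b, hb, hba⟩ := Finset.exists_mem_ne h2 a
          obtain ⟨i, rfl⟩ := hfsurj b hb
          exact Finset.le_sup (f := B) (Finset.mem_univ i)
            (Finset.mem_erase.2 ⟨fun h => hba h.symm, ha⟩)
      have hinf : ∀ I : Finset (Fin A.card), I ≠ ∅ → I.inf B = A \ I.image f := by
        intro I hI
        obtain ⟨i0, hi0⟩ := Finset.nonempty_iff_ne_empty.2 hI
        apply le_antisymm
        · intro x hx
          rw [Finset.mem_sdiff]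
          constructor
          · exact Finset.mem_of_mem_erase (Finset.le_iff_subset.1 (Finset.inf_le hi0) hx)
          · intro hxim
            obtain ⟨i, hiI, hfi⟩ := Finset.mem_image.1 hxim
            exact (Finset.mem_erase.1 (Finset.le_iff_subset.1 (Finset.inf_le hiI) hx)).1 hfi.symm
        · apply Finset.le_inf
          intro i hiI x hx
          rw [Finset.mem_sdiff] at hx
          exact Finset.mem_erase.2
            ⟨fun h => hx.2 (Finset.mem_image.2 ⟨i, hiI, h.symm⟩), hx.1⟩
      have htm' := htm A.card B
      rw [hsup] at htm'
      have hsum : ∑ I ∈ (Finset.univ.powerset.erase (∅ : Finset (Fin A.card))),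
          (-1 : ℝ) ^ (I.card + 1) * lam' (I.inf B)
          = ∑ C ∈ A.powerset.erase A, (-1 : ℝ) ^ (A.card - C.card + 1) * lam' C := by
        refine Finset.sum_nbij' (fun I => A \ I.image f)
          (fun C => Finset.univ.filter (fun i => f i ∉ C)) ?_ ?_ ?_ ?_ ?_
        · intro I hI
          rw [Finset.mem_erase] at hI
          rw [Finset.mem_erase, Finset.mem_powerset]
          refine ⟨?_, Finset.sdiff_subset⟩
          obtain ⟨i0, hi0⟩ := Finset.nonempty_iff_ne_empty.2 hI.1
          intro hEq
          replace hEq : A \ I.image f = A := hEq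
          have : f i0 ∈ A \ I.image f := by rw [hEq]; exact hfA i0
          rw [Finset.mem_sdiff] at this
          exact this.2 (Finset.mem_image.2 ⟨i0, hi0, rfl⟩)
        · intro C hC
          rw [Finset.mem_erase, Finset.mem_powerset] at hC
          rw [Finset.mem_erase]
          refine ⟨?_, Finset.mem_powerset.2 (Finset.subset_univ _)⟩
          have : (A \ C).Nonempty := by
            rw [Finset.sdiff_nonempty]
            exact fun h => hC.1 (subset_antisymm hC.2 h)
          obtain ⟨a, ha⟩ := this
          rw [Finset.mem_sdiff] at ha
          obtain ⟨i, rfl⟩ := hfsurj a ha.1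
          exact Finset.nonempty_iff_ne_empty.1 ⟨i, Finset.mem_filter.2 ⟨Finset.mem_univ i, ha.2⟩⟩
        · intro I hI
          ext i
          simp only [Finset.mem_filter, Finset.mem_univ, true_and, Finset.mem_sdiff,
            not_and, not_not]
          constructor
          · intro h
            have := h (hfA i)
            exact (hfinj.mem_finset_image).1 this
          · intro hiI _
            exact Finset.mem_image.2 ⟨i, hiI, rfl⟩
        · intro C hC
          rw [Finset.mem_erase, Finset.mem_powerset] at hC
          show A \ (Finset.univ.filter (fun i => f i ∉ C)).image f = C
          have him : (Finset.univ.filter (fun i => f i ∉ C)).image f = A \ C := by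
            ext a
            simp only [Finset.mem_image, Finset.mem_filter, Finset.mem_univ, true_and,
              Finset.mem_sdiff]
            constructor
            · rintro ⟨i, hi, rfl⟩
              exact ⟨hfA i, hi⟩
            · rintro ⟨haA, haC⟩
              obtain ⟨i, rfl⟩ := hfsurj a haA
              exact ⟨i, haC, rfl⟩
          rw [him, Finset.sdiff_sdiff_self_left, Finset.inter_eq_right.2 hC.2]
        · intro I hI
          rw [Finset.mem_erase] at hI
          rw [hinf I hI.1]
          have hcardim : (I.image f).card = I.card := Finset.card_image_of_injective I hfinj
          have hsub : I.image f ⊆ A := fun a ha => by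
            obtain ⟨i, _, rfl⟩ := Finset.mem_image.1 ha; exact hfA i
          have hIle : I.card ≤ A.card := by
            rw [← hcardim]; exact Finset.card_le_card hsub
          rw [Finset.card_sdiff_of_subset hsub, hcardim, Nat.sub_sub_self hIle]
      rw [hsum] at htm'
      have hmA : m A = lam' A - ∑ C ∈ A.powerset.erase A,
          (-1 : ℝ) ^ (A.card - C.card + 1) * lam' C := by
        simp only [hm]
        rw [← Finset.add_sum_erase A.powerset _ (Finset.mem_powerset_self A)]
        simp only [Nat.sub_self, pow_zero, one_mul]
        rw [sub_eq_add_neg, ← Finset.sum_neg_distrib]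
        congr 1
        refine Finset.sum_congr rfl fun C _ => ?_
        rw [pow_succ]
        ring
      rw [hmA]
      linarith
end

section
/- The Choquet-type integral ∫ x dλ = ∫₀^∞ λ({ω : x(ω) ≥ r}) dr, for nonnegative measurable functions x on a finite set Ω and a likelihood appraisal λ on 2^Ω, is additive over comonotone pairs when λ is a monotone capacity: if x and y are comonotone (there are no ω, ω' with x(ω) > x(ω') and y(ω) < y(ω')), then ∫ (x+y) dλ = ∫ x dλ + ∫ y dλ. -/
open MeasureTheory

/-- The Choquet integral of a nonnegative function with respect to a
likelihood appraisal, via the decreasing-distribution formula. -/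
noncomputable def choquet {Ω : Type} (lam : Set Ω → ℝ) (x : Ω → ℝ) : ℝ :=
  ∫ r in Set.Ioi (0 : ℝ), lam {ω | r ≤ x ω}

def chainSet {Ω : Type} {n : ℕ} (e : Fin n ≃ Ω) (k : ℕ) : Set Ω :=
  {ω | ((e.symm ω : Fin n) : ℕ) < k}

lemma indicator_integrable (c a : ℝ) :
    IntegrableOn (fun r : ℝ => c * (if r ≤ a then (1:ℝ) else 0)) (Set.Ioi 0) := by
  have hfun : (fun r : ℝ => c * (if r ≤ a then (1:ℝ) else 0))
      = Set.indicator (Set.Iic a) (fun _ => c) := by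
    funext r
    by_cases h : r ≤ a <;> simp [Set.indicator, h]
  rw [hfun, IntegrableOn, integrable_indicator_iff measurableSet_Iic]
  refine (integrableOn_const_iff).mpr (Or.inr ?_)
  rw [Measure.restrict_apply measurableSet_Iic, Set.inter_comm, Set.Ioi_inter_Iic,
    Real.volume_Ioc]
  exact ENNReal.ofReal_lt_top

lemma indicator_integral (c a : ℝ) (ha : 0 ≤ a) :
    (∫ r in Set.Ioi (0:ℝ), c * (if r ≤ a then (1:ℝ) else 0)) = c * a := by
  rw [MeasureTheory.integral_const_mul]
  have hfun : (fun r : ℝ => (if r ≤ a then (1:ℝ) else 0))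
      = Set.indicator (Set.Iic a) (fun _ => (1:ℝ)) := by
    funext r
    by_cases h : r ≤ a <;> simp [Set.indicator, h]
  rw [hfun, MeasureTheory.setIntegral_indicator measurableSet_Iic, Set.Ioi_inter_Iic,
    setIntegral_const, measureReal_def, Real.volume_Ioc, smul_eq_mul, mul_one, sub_zero,
    ENNReal.toReal_ofReal ha]

lemma choquet_eq_sum {Ω : Type} [Fintype Ω] (lam : Set Ω → ℝ)
    (h0 : lam ∅ = 0)
    (e : Fin (Fintype.card Ω) ≃ Ω)
    (f : Ω → ℝ) (hf : ∀ ω, 0 ≤ f ω) (hanti : Antitone (f ∘ e)) :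
    choquet lam f = ∑ i : Fin (Fintype.card Ω),
      (lam (chainSet e ((i : ℕ) + 1)) - lam (chainSet e (i : ℕ))) * f (e i) := by
  classical
  have hA0 : chainSet e 0 = ∅ := by
    ext ω; simp [chainSet]
  have key : ∀ r : ℝ, lam {ω | r ≤ f ω} =
      ∑ i : Fin (Fintype.card Ω),
        (lam (chainSet e ((i:ℕ)+1)) - lam (chainSet e (i:ℕ))) * (if r ≤ f (e i) then 1 else 0) := by
    intro r
    set S : Finset (Fin (Fintype.card Ω)) :=
      Finset.univ.filter (fun i => r ≤ f (e i)) with hS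
    set N := S.card with hN
    have hmemS : ∀ i, i ∈ S ↔ r ≤ f (e i) := by
      intro i; simp [hS]
    have hmem : ∀ i : Fin (Fintype.card Ω), r ≤ f (e i) ↔ (i : ℕ) < N := by
      intro i
      constructor
      · intro hi
        have hsub : Finset.Iic i ⊆ S := by
          intro j hj
          rw [hmemS]
          have := hanti (Finset.mem_Iic.mp hj)
          simp only [Function.comp] at this
          exact le_trans hi this
        have := Finset.card_le_card hsub
        rw [Fin.card_Iic] at this
        omega
      · intro hi
        by_contra hcon
        have hsub : S ⊆ Finset.Iio i := by
          intro j hj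
          rw [Finset.mem_Iio]
          by_contra hji
          have h2 := hanti (not_lt.mp hji)
          simp only [Function.comp] at h2
          exact hcon (le_trans (hmemS j |>.mp hj) h2)
        have := Finset.card_le_card hsub
        rw [Fin.card_Iio] at this
        omega
    have hNn : N ≤ Fintype.card Ω :=
      le_trans (Finset.card_le_card (Finset.filter_subset _ _)) (by simp)
    have hset : {ω | r ≤ f ω} = chainSet e N := by
      ext ω
      have := hmem (e.symm ω)
      simp only [Equiv.apply_symm_apply] at this
      simpa [chainSet] using this
    have hsum : ∑ i : Fin (Fintype.card Ω),
          (lam (chainSet e ((i:ℕ)+1)) - lam (chainSet e (i:ℕ))) * (if r ≤ f (e i) then 1 else 0)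
        = ∑ i : Fin (Fintype.card Ω),
          (lam (chainSet e ((i:ℕ)+1)) - lam (chainSet e (i:ℕ))) * (if (i:ℕ) < N then 1 else 0) := by
      refine Finset.sum_congr rfl fun i _ => ?_
      rw [if_congr (hmem i) rfl rfl]
    rw [hset, hsum,
      Fin.sum_univ_eq_sum_range
        (fun k => (lam (chainSet e (k+1)) - lam (chainSet e k)) * (if k < N then 1 else 0))
        (Fintype.card Ω)]
    have hss : ∑ k ∈ Finset.range N,
          ((lam (chainSet e (k+1)) - lam (chainSet e k)) * (if k < N then 1 else 0))
        = ∑ k ∈ Finset.range (Fintype.card Ω),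
          ((lam (chainSet e (k+1)) - lam (chainSet e k)) * (if k < N then 1 else 0)) := by
      refine Finset.sum_subset (Finset.range_subset_range.mpr hNn) ?_
      intro k _ hk
      rw [Finset.mem_range] at hk
      simp [hk]
    rw [← hss]
    have h3 : ∑ k ∈ Finset.range N,
          ((lam (chainSet e (k+1)) - lam (chainSet e k)) * (if k < N then 1 else 0))
        = ∑ k ∈ Finset.range N, (lam (chainSet e (k+1)) - lam (chainSet e k)) := by
      refine Finset.sum_congr rfl fun k hk => ?_
      simp [Finset.mem_range.mp hk]
    rw [h3, Finset.sum_range_sub (fun k => lam (chainSet e k)) N, hA0, h0, sub_zero]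
  show (∫ r in Set.Ioi (0:ℝ), lam {ω | r ≤ f ω}) = _
  simp only [key]
  rw [MeasureTheory.integral_finset_sum _
    (fun (i : Fin (Fintype.card Ω)) _ => indicator_integrable (lam (chainSet e ((i:ℕ)+1)) - lam (chainSet e (i:ℕ))) (f (e i)))]
  exact Finset.sum_congr rfl fun i _ =>
    indicator_integral (lam (chainSet e ((i:ℕ)+1)) - lam (chainSet e (i:ℕ))) (f (e i)) (hf (e i))

/-- Comonotone additivity of the Choquet integral for a monotone capacity on a
finite set. -/
theorem stmt_19 {Ω : Type} [Fintype Ω] [Nonempty Ω]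
    (lam : Set Ω → ℝ)
    (h0 : lam ∅ = 0) (h1 : lam Set.univ = 1)
    (hmono : ∀ A B : Set Ω, A ⊆ B → lam A ≤ lam B)
    (x y : Ω → ℝ) (hx : ∀ ω, 0 ≤ x ω) (hy : ∀ ω, 0 ≤ y ω)
    (hcomon : ∀ ω ω', ¬ (x ω' < x ω ∧ y ω < y ω')) :
    choquet lam (fun ω => x ω + y ω) = choquet lam x + choquet lam y := by
  classical
  let e0 : Fin (Fintype.card Ω) ≃ Ω := (Fintype.equivFin Ω).symm
  let g : Fin (Fintype.card Ω) → ℝ := fun i => -(x (e0 i) + y (e0 i))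
  let σ : Equiv.Perm (Fin (Fintype.card Ω)) := Tuple.sort g
  let e : Fin (Fintype.card Ω) ≃ Ω := σ.trans e0
  have hzmono : Monotone (g ∘ σ) := Tuple.monotone_sort g
  have hzanti : Antitone (fun i : Fin (Fintype.card Ω) => x (e i) + y (e i)) := by
    intro i j hij
    have := hzmono hij
    simp only [Function.comp, g, e, Equiv.trans_apply] at this ⊢
    linarith
  have hxanti : Antitone (x ∘ e) := by
    intro i j hij
    by_contra hcon
    push_neg at hcon
    simp only [Function.comp] at hcon
    have hyle : y (e i) ≤ y (e j) := by
      by_contra hy'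
      push_neg at hy'
      exact hcomon (e j) (e i) ⟨hcon, hy'⟩
    have := hzanti hij
    simp only [Function.comp] at this ⊢
    linarith
  have hyanti : Antitone (y ∘ e) := by
    intro i j hij
    by_contra hcon
    push_neg at hcon
    simp only [Function.comp] at hcon
    have hxle : x (e i) ≤ x (e j) := by
      by_contra hx'
      push_neg at hx'
      exact hcomon (e i) (e j) ⟨hx', hcon⟩
    have := hzanti hij
    simp only [Function.comp] at this ⊢
    linarith
  have hzanti' : Antitone ((fun ω => x ω + y ω) ∘ e) := by
    intro i j hij; exact hzanti hij
  rw [choquet_eq_sum lam h0 e (fun ω => x ω + y ω)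
      (fun ω => add_nonneg (hx ω) (hy ω)) hzanti',
    choquet_eq_sum lam h0 e x hx hxanti,
    choquet_eq_sum lam h0 e y hy hyanti,
    ← Finset.sum_add_distrib]
  exact Finset.sum_congr rfl fun i _ => by ring
end
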